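/- Every pair of separating walks of length k in G_d satisfies k ≥ 2d − 3. -/

import Mathlib

namespace Paper

/-- Nodes of the tree `G_d` are finite sequences of pairs of numbers.
We represent a sequence `(a₁, …, a_i)` as the list `[a_i, …, a₁]`, i.e. in
reverse order, so that consing corresponds to appending a pair at the end. -/
abbrev Nd : Type := ℕ × ℕ

/-- `b₂⁺`: `1` if `b₂ = 0`, and `b₂` otherwise. -/
def bplus (b : ℕ) : ℕ := if b = 0 then 1 else b

/-- For `j ≥ 1`, the `j`-th smallest element of `{lo, lo+1, lo+2, …} \ {f}`.
This realises the greedy choices `c^j = min({lo,…} \ {f, c¹, …, c^{j-1}})`. -/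
def nthAvoid (lo f j : ℕ) : ℕ :=
  if lo + j - 1 < f ∨ f < lo then lo + j - 1 else lo + j

/-- The node set `V_d` of the graph `G_d`, given by the rules (G1)–(G4).
(Sequences are represented as reversed lists, the head being the last pair
`a_i` of the sequence.) -/
inductive Vd (d : ℕ) : List Nd → Prop
  /-- (G1): the empty sequence is a node. -/
  | nil : Vd d []
  /-- (G2): the sequences `((1,0)), ((2,1)), …, ((d,d−1))` are nodes. -/
  | base (k : ℕ) (h1 : 1 ≤ k) (h2 : k ≤ d) : Vd d [(k, k - 1)]
  /-- (G3): children of a node of odd length `< 2d` with last pair `(b₁, b₂)`: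
  for `j = 1, …, d−1` append `(c₁ʲ, c₂ʲ)` where `c₁ʲ` is the `j`-th smallest
  element of `{1,…,d} \ {b₂⁺}` and `c₂ʲ` the `j`-th smallest of `{1,…,d} \ {b₁}`. -/
  | odd (b₁ b₂ : ℕ) (rest : List Nd)
      (hv : Vd d ((b₁, b₂) :: rest))
      (hodd : Odd ((b₁, b₂) :: rest).length)
      (hlt : ((b₁, b₂) :: rest).length < 2 * d)
      (j : ℕ) (hj1 : 1 ≤ j) (hj2 : j ≤ d - 1) :
      Vd d ((nthAvoid 1 (bplus b₂) j, nthAvoid 1 b₁ j) :: (b₁, b₂) :: rest)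
  /-- (G4): children of a node of even positive length `< 2d` with last pair
  `(b₁, b₂)`: for `j = 1, …, d−1` append `(c₁ʲ, c₂ʲ)` where `c₁ʲ` is the `j`-th
  smallest element of `{1,…,d} \ {b₂}` and `c₂ʲ` the `j`-th smallest of
  `{0,…,d−1} \ {b₁}`. -/
  | even (b₁ b₂ : ℕ) (rest : List Nd)
      (hv : Vd d ((b₁, b₂) :: rest))
      (heven : Even ((b₁, b₂) :: rest).length)
      (hlt : ((b₁, b₂) :: rest).length < 2 * d)
      (j : ℕ) (hj1 : 1 ≤ j) (hj2 : j ≤ d - 1) :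
      Vd d ((nthAvoid 1 b₂ j, nthAvoid 0 b₁ j) :: (b₁, b₂) :: rest)

/-- The edge relation of `G_d`: `u` is a child of `v` or vice versa. -/
def Ed (d : ℕ) (v u : List Nd) : Prop :=
  Vd d v ∧ Vd d u ∧ ∃ a : Nd, u = a :: v ∨ v = a :: u

/-- The outgoing port number `π_d(v, u)` from `v` towards an adjacent node `u`:
if `u = (b₁, b₂) :: v` is a child of `v` then `b₁`, and if `v = (b₁, b₂) :: u`
is a child of `u` then `b₂`. -/
def outPort (v u : List Nd) : ℕ :=
  if u.length = v.length + 1 then u.headI.1 else v.headI.2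

/-- A pair of compatible walks (PCW) of length `k` in `G_d`:
two walks starting at `((1,0))` and `((2,1))` such that the outgoing port
numbers backwards along the walks coincide. -/
structure IsPCW (d k : ℕ) (w₁ w₂ : ℕ → List Nd) : Prop where
  klen : k ≤ 2 * d - 3
  walk₁ : ∀ j < k, Ed d (w₁ j) (w₁ (j + 1))
  walk₂ : ∀ j < k, Ed d (w₂ j) (w₂ (j + 1))
  start₁ : w₁ 0 = [(1, 0)]
  start₂ : w₂ 0 = [(2, 1)]
  compat : ∀ j, 1 ≤ j → j ≤ k →
    outPort (w₁ j) (w₁ (j - 1)) = outPort (w₂ j) (w₂ (j - 1))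

/-- A pair of separating walks (PSW): a PCW such that the last node of the
first walk has a neighbour whose outgoing port number towards it is matched
by no neighbour of the last node of the second walk. -/
structure IsPSW (d k : ℕ) (w₁ w₂ : ℕ → List Nd)
    extends IsPCW d k w₁ w₂ : Prop where
  sep : ∃ x, Ed d (w₁ k) x ∧
    ∀ y, Ed d (w₂ k) y → outPort x (w₁ k) ≠ outPort y (w₂ k)

/-- A PSW of length `k` in `G_d` is critical if there is no strictly shorter
PSW in `G_d`. -/
def IsCriticalPSW (d k : ℕ) (w₁ w₂ : ℕ → List Nd) : Prop :=
  IsPSW d k w₁ w₂ ∧ ∀ k' w₁' w₂', IsPSW d k' w₁' w₂' → k ≤ k'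

/-! ### Auxiliary machinery for the lower bound proof -/

section Aux

/-- Maximum label occurring in a node. -/
def maxLab : List Nd → ℕ
  | [] => 0
  | e :: v => max (max e.1 e.2) (maxLab v)

lemma maxLab_cons (e : Nd) (v : List Nd) :
    maxLab (e :: v) = max (max e.1 e.2) (maxLab v) := rfl

lemma fst_le_maxLab (x y : ℕ) (v : List Nd) : x ≤ maxLab ((x, y) :: v) := by
  rw [maxLab_cons]; exact le_trans (le_max_left _ _) (le_max_left _ _)

lemma snd_le_maxLab (x y : ℕ) (v : List Nd) : y ≤ maxLab ((x, y) :: v) := by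
  rw [maxLab_cons]; exact le_trans (le_max_right _ _) (le_max_left _ _)

lemma tail_le_maxLab (e : Nd) (v : List Nd) : maxLab v ≤ maxLab (e :: v) := by
  rw [maxLab_cons]; exact le_max_right _ _

lemma maxLab_cons_le {e : Nd} {v : List Nd} {m : ℕ}
    (h1 : e.1 ≤ m) (h2 : e.2 ≤ m) (h3 : maxLab v ≤ m) : maxLab (e :: v) ≤ m := by
  rw [maxLab_cons]; exact max_le (max_le h1 h2) h3

/-- The potential relation: `Rel d n a b` says that the pair of nodes
`(a, b)` cannot be separated within fewer than `n` further steps.  It requires,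
for every "discrepancy witness" at aligned depth `i` (and for the length
difference), that `n` plus twice the maximal label occurring from that depth on
is small enough. -/
def Rel (d : ℕ) : ℕ → List Nd → List Nd → Prop
  | _, [], [] => True
  | n, [], y :: b => n + 2 * maxLab (y :: b) ≤ 2 * d
  | n, x :: a, [] => n + 2 * maxLab (x :: a) ≤ 2 * d
  | n, x :: a, y :: b =>
      (x = y ∨ (n + 2 * maxLab (x :: a) ≤ 2 * d + (a.length + 1) % 2 ∧
                n + 2 * maxLab (y :: b) ≤ 2 * d + (a.length + 1) % 2)) ∧
      Rel d (n - 1) a b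

lemma rel_mono {d : ℕ} : ∀ {a b : List Nd} {m n : ℕ}, m ≤ n →
    Rel d n a b → Rel d m a b := by
  intro a
  induction a with
  | nil =>
    intro b m n hmn h
    cases b with
    | nil => trivial
    | cons y b => simp only [Rel] at h ⊢; omega
  | cons x a ih =>
    intro b m n hmn h
    cases b with
    | nil => simp only [Rel] at h ⊢; omega
    | cons y b =>
      simp only [Rel] at h ⊢
      obtain ⟨h1, h2⟩ := h
      refine ⟨?_, ih (by omega) h2⟩
      rcases h1 with h1 | h1
      · exact Or.inl h1
      · exact Or.inr ⟨by omega, by omega⟩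

lemma rel_symm {d : ℕ} : ∀ {a b : List Nd} {n : ℕ},
    a.length % 2 = b.length % 2 → Rel d n a b → Rel d n b a := by
  intro a
  induction a with
  | nil =>
    intro b n hpar h
    cases b with
    | nil => trivial
    | cons y b => simp only [Rel] at h ⊢; exact h
  | cons x a ih =>
    intro b n hpar h
    cases b with
    | nil => simp only [Rel] at h ⊢; exact h
    | cons y b =>
      simp only [Rel] at h ⊢
      obtain ⟨h1, h2⟩ := h
      simp only [List.length_cons] at hpar
      have hpar' : a.length % 2 = b.length % 2 := by omega
      refine ⟨?_, ih hpar' h2⟩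
      rcases h1 with h1 | h1
      · exact Or.inl h1.symm
      · refine Or.inr ⟨?_, ?_⟩ <;>
        · have : (b.length + 1) % 2 = (a.length + 1) % 2 := by omega
          rw [this]; omega

lemma rel_of_bound {d : ℕ} : ∀ {a b : List Nd} {n : ℕ},
    a.length % 2 = b.length % 2 →
    n + 2 * maxLab a ≤ 2 * d + a.length % 2 →
    n + 2 * maxLab b ≤ 2 * d + a.length % 2 →
    Rel d n a b := by
  intro a
  induction a with
  | nil =>
    intro b n hpar h1 h2
    cases b with
    | nil => trivial
    | cons y b => simpa only [Rel, List.length_nil, Nat.zero_mod, Nat.add_zero] using h2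
  | cons x a ih =>
    intro b n hpar h1 h2
    cases b with
    | nil =>
      simp only [List.length_nil] at hpar
      simp only [Rel]
      omega
    | cons y b =>
      simp only [List.length_cons] at hpar h1 h2 ⊢
      simp only [Rel]
      constructor
      · exact Or.inr ⟨by simpa using h1, by simpa using h2⟩
      · have ht1 : maxLab a ≤ maxLab (x :: a) := tail_le_maxLab _ _
        have ht2 : maxLab b ≤ maxLab (y :: b) := tail_le_maxLab _ _
        exact ih (by omega) (by omega) (by omega)

lemma rel_ne_bound {d n : ℕ} {x y : Nd} {a b : List Nd}
    (h : Rel d n (x :: a) (y :: b)) (hne : x ≠ y) :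
    n + 2 * maxLab (x :: a) ≤ 2 * d + (a.length + 1) % 2 ∧
    n + 2 * maxLab (y :: b) ≤ 2 * d + (a.length + 1) % 2 := by
  rcases h.1 with h1 | h1
  · exact absurd h1 hne
  · exact h1

lemma rel_nil_bound {d n : ℕ} {y : Nd} {b : List Nd}
    (h : Rel d n [] (y :: b)) : n + 2 * maxLab (y :: b) ≤ 2 * d := h

lemma rel_bound_nil {d n : ℕ} {x : Nd} {a : List Nd}
    (h : Rel d n (x :: a) []) : n + 2 * maxLab (x :: a) ≤ 2 * d := h

lemma rel_tail {d n : ℕ} {x y : Nd} {a b : List Nd}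
    (h : Rel d n (x :: a) (y :: b)) : Rel d (n - 1) a b := h.2

/-! #### Arithmetic facts about `nthAvoid` -/

lemma nA1_ne {f j : ℕ} (hj : 1 ≤ j) : nthAvoid 1 f j ≠ f := by
  simp only [nthAvoid]; split_ifs <;> omega

lemma nA0_ne {f j : ℕ} (hj : 1 ≤ j) : nthAvoid 0 f j ≠ f := by
  simp only [nthAvoid]; split_ifs <;> omega

lemma nA1_inj {f j j' : ℕ} (h : nthAvoid 1 f j = nthAvoid 1 f j') : j = j' := by
  simp only [nthAvoid] at h; split_ifs at h <;> omega

lemma nA0_inj {f j j' : ℕ} (hj : 1 ≤ j) (hj' : 1 ≤ j')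
    (h : nthAvoid 0 f j = nthAvoid 0 f j') : j = j' := by
  simp only [nthAvoid] at h; split_ifs at h <;> omega

lemma nA1_pos {f j : ℕ} (hj : 1 ≤ j) : 1 ≤ nthAvoid 1 f j := by
  simp only [nthAvoid]; split_ifs <;> omega

lemma nA1_le {d f j : ℕ} (hj : 1 ≤ j) (hj2 : j ≤ d - 1) : nthAvoid 1 f j ≤ d := by
  simp only [nthAvoid]; split_ifs <;> omega

lemma nA0_le {d f j : ℕ} (hj : 1 ≤ j) (hj2 : j ≤ d - 1) : nthAvoid 0 f j + 1 ≤ d := by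
  simp only [nthAvoid]; split_ifs <;> omega

lemma odd_dd_bound {x y x' y' j j' c c' X : ℕ}
    (hx : 1 ≤ x) (hx' : 1 ≤ x') (hj : 1 ≤ j) (hj' : 1 ≤ j')
    (hc : c = nthAvoid 1 (bplus y) j) (hc' : c' = nthAvoid 1 (bplus y') j')
    (hp : nthAvoid 1 x j = nthAvoid 1 x' j')
    (hne : c ≠ c')
    (h1 : x ≤ X) (h2 : y ≤ X) (h3 : x' ≤ X) (h4 : y' ≤ X) :
    c ≤ X ∧ c' ≤ X ∧ nthAvoid 1 x j ≤ X := by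
  simp only [nthAvoid, bplus] at hc hc' hp ⊢
  split_ifs at hc hc' hp ⊢ <;> omega

lemma even_dd_bound {x y x' y' j j' c c' X : ℕ}
    (hx : 1 ≤ x) (hx' : 1 ≤ x') (hy : 1 ≤ y) (hy' : 1 ≤ y')
    (hj : 1 ≤ j) (hj' : 1 ≤ j')
    (hc : c = nthAvoid 1 y j) (hc' : c' = nthAvoid 1 y' j')
    (hp : nthAvoid 0 x j = nthAvoid 0 x' j')
    (hne : c ≠ c')
    (h1 : x ≤ X) (h2 : y ≤ X) (h3 : x' ≤ X) (h4 : y' ≤ X) :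
    c ≤ X + 1 ∧ c' ≤ X + 1 ∧ nthAvoid 0 x j ≤ X := by
  simp only [nthAvoid] at hc hc' hp ⊢
  split_ifs at hc hc' hp ⊢ <;> omega

lemma base_even_bound {x' y' j k X : ℕ}
    (hx' : 1 ≤ x') (hy' : 1 ≤ y') (hj : 1 ≤ j)
    (hp : nthAvoid 0 x' j + 1 = k)
    (hne : k ≠ nthAvoid 1 y' j)
    (h3 : x' ≤ X) (h4 : y' ≤ X) :
    k ≤ X ∧ nthAvoid 1 y' j ≤ X + 1 := by
  simp only [nthAvoid] at hp hne ⊢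
  split_ifs at hp hne ⊢ <;> omega

lemma ud_odd_bound {x' z j X : ℕ} (hx' : 1 ≤ x') (hj : 1 ≤ j)
    (hp : nthAvoid 1 x' j ≤ X) (hx2 : x' ≤ X) : nthAvoid 1 z j ≤ X := by
  simp only [nthAvoid] at hp ⊢
  split_ifs at hp ⊢ <;> omega

lemma ud_even_bound {x' z j X : ℕ} (hx' : 1 ≤ x') (hj : 1 ≤ j)
    (hp : nthAvoid 0 x' j ≤ X) (hx2 : x' ≤ X) : nthAvoid 1 z j ≤ X + 1 := by
  simp only [nthAvoid] at hp ⊢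
  split_ifs at hp ⊢ <;> omega

/-! #### Structural facts about `Vd` -/

lemma vd_tail {d : ℕ} {c : Nd} {v : List Nd} (h : Vd d (c :: v)) : Vd d v := by
  cases h with
  | base k h1 h2 => exact Vd.nil
  | odd b₁ b₂ rest hv hodd hlt j hj1 hj2 => exact hv
  | even b₁ b₂ rest hv heven hlt j hj1 hj2 => exact hv

lemma vd_bounds {d x y : ℕ} {v : List Nd} (h : Vd d ((x, y) :: v)) :
    1 ≤ x ∧ x ≤ d ∧ (v.length % 2 = 1 → 1 ≤ y) := by
  cases h with
  | base k h1 h2 =>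
    refine ⟨h1, h2, ?_⟩
    simp only [List.length_nil]
    omega
  | odd b₁ b₂ rest hv hodd hlt j hj1 hj2 =>
    rw [Nat.odd_iff] at hodd
    refine ⟨nA1_pos hj1, nA1_le hj1 hj2, fun _ => nA1_pos hj1⟩
  | even b₁ b₂ rest hv heven hlt j hj1 hj2 =>
    rw [Nat.even_iff] at heven
    simp only [List.length_cons] at heven ⊢
    refine ⟨nA1_pos hj1, nA1_le hj1 hj2, ?_⟩
    intro hcon
    omega

/-! #### outPort computations -/

lemma outPort_down (c : Nd) (v : List Nd) : outPort (c :: v) v = c.2 := by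
  simp only [outPort, List.length_cons]
  rw [if_neg (by omega)]
  rfl

lemma outPort_up (c : Nd) (v : List Nd) : outPort v (c :: v) = c.1 := by
  simp [outPort]

/-! #### The drop lemma -/

lemma rel_drop_dd {d n : ℕ} {ca cb : Nd} {a b : List Nd}
    (hVa' : Vd d (ca :: a)) (hVb' : Vd d (cb :: b))
    (hpar : a.length % 2 = b.length % 2)
    (hp : ca.2 = cb.2)
    (hR : Rel d (n + 1) a b) : Rel d n (ca :: a) (cb :: b) := by
  by_cases hcc : ca = cb
  · subst hcc
    exact ⟨Or.inl rfl, rel_mono (by omega) hR⟩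
  refine ⟨Or.inr ?_, rel_mono (by omega) hR⟩
  cases hVa' with
  | base k h1 h2 =>
    -- a = [], ca = (k, k-1)
    cases hVb' with
    | base k' h1' h2' =>
      exfalso
      apply hcc
      dsimp only at hp
      have : k = k' := by omega
      simp [this]
    | odd b₁ b₂ rest hv hodd hlt j hj1 hj2 =>
      exfalso
      rw [Nat.odd_iff] at hodd
      simp only [List.length_nil, List.length_cons] at hpar hodd
      omega
    | even b₁ b₂ rest hv heven hlt j hj1 hj2 =>
      -- base vs even
      dsimp only at hp
      have hne : k ≠ nthAvoid 1 b₂ j := by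
        intro hk
        apply hcc
        simp only [Prod.ext_iff]
        exact ⟨hk.symm ▸ rfl, by omega⟩
      obtain ⟨hx', hxd', hy'⟩ := vd_bounds hv
      rw [Nat.even_iff] at heven
      simp only [List.length_cons] at heven
      have hy'1 : 1 ≤ b₂ := hy' (by omega)
      have hEx := rel_nil_bound hR
      set X := maxLab ((b₁, b₂) :: rest) with hX
      have hb1 : b₁ ≤ X := fst_le_maxLab _ _ _
      have hb2 : b₂ ≤ X := snd_le_maxLab _ _ _
      obtain ⟨hk, hc'⟩ := base_even_bound hx' hy'1 hj1 (by omega) hne hb1 hb2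
      constructor
      · have hm : maxLab [(k, k - 1)] ≤ k :=
          maxLab_cons_le (le_refl _) (by omega) (by simp [maxLab])
        simp only [List.length_nil, List.length_cons]
        omega
      · have hm : maxLab ((nthAvoid 1 b₂ j, nthAvoid 0 b₁ j) :: (b₁, b₂) :: rest) ≤ X + 1 :=
          maxLab_cons_le hc' (by dsimp only; omega) (by omega)
        simp only [List.length_nil, List.length_cons]
        omega
  | odd x y ra hva hodd hlt j hj1 hj2 =>
    -- a = (x,y) :: ra, ca = (nA 1 (bplus y) j, nA 1 x j)
    rw [Nat.odd_iff] at hodd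
    cases hVb' with
    | base k' h1' h2' =>
      exfalso
      simp only [List.length_cons, List.length_nil] at hpar hodd
      omega
    | even b₁ b₂ rest hv heven hlt' j' hj1' hj2' =>
      exfalso
      rw [Nat.even_iff] at heven
      simp only [List.length_cons] at hpar hodd heven
      omega
    | odd x' y' rb hvb hodd' hlt' j' hj1' hj2' =>
      dsimp only at hp
      obtain ⟨hx1, hxd, -⟩ := vd_bounds hva
      obtain ⟨hx1', hxd', -⟩ := vd_bounds hvb
      have hhd : (x, y) ≠ (x', y') → True := fun _ => trivial
      by_cases hhe : (x, y) = (x', y')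
      · exfalso
        apply hcc
        obtain ⟨hx', hy'⟩ := Prod.mk.injEq .. ▸ hhe
        subst hx'; subst hy'
        have := nA1_inj hp
        subst this
        rfl
      · have hEx := rel_ne_bound hR hhe
        set A := maxLab ((x, y) :: ra) with hA
        set B := maxLab ((x', y') :: rb) with hB
        set X := max A B with hXd
        have hXA : A ≤ X := le_max_left _ _
        have hXB : B ≤ X := le_max_right _ _
        have hXc : X = A ∨ X = B := max_choice _ _
        have hxA : x ≤ A := fst_le_maxLab _ _ _
        have hyA : y ≤ A := snd_le_maxLab _ _ _
        have hxB : x' ≤ B := fst_le_maxLab _ _ _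
        have hyB : y' ≤ B := snd_le_maxLab _ _ _
        have hne1 : nthAvoid 1 (bplus y) j ≠ nthAvoid 1 (bplus y') j' := by
          intro he
          apply hcc
          simp only [Prod.ext_iff]
          exact ⟨he, hp⟩
        obtain ⟨hb1, hb2, hb3⟩ := odd_dd_bound (X := X) hx1 hx1' hj1 hj1' rfl rfl hp hne1
          (by omega) (by omega) (by omega) (by omega)
        have hodd2 : ((x, y) :: ra).length % 2 = 1 := hodd
        simp only [List.length_cons] at hodd2 hEx hpar ⊢
        have hm1 : maxLab ((nthAvoid 1 (bplus y) j, nthAvoid 1 x j) :: (x, y) :: ra) ≤ X :=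
          maxLab_cons_le hb1 hb3 (by omega)
        have hm2 : maxLab ((nthAvoid 1 (bplus y') j', nthAvoid 1 x' j') :: (x', y') :: rb) ≤ X := by
          refine maxLab_cons_le hb2 ?_ (by omega)
          simp only
          omega
        constructor <;> omega
  | even x y ra hva heven hlt j hj1 hj2 =>
    rw [Nat.even_iff] at heven
    cases hVb' with
    | base k' h1' h2' =>
      -- even vs base : mirror of base vs even
      dsimp only at hp
      have hne : k' ≠ nthAvoid 1 y j := by
        intro hk
        apply hcc
        simp only [Prod.ext_iff]
        exact ⟨hk.symm ▸ rfl, by omega⟩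
      obtain ⟨hx', hxd', hy'⟩ := vd_bounds hva
      simp only [List.length_cons] at heven
      have hy'1 : 1 ≤ y := hy' (by omega)
      have hEx := rel_bound_nil hR
      set X := maxLab ((x, y) :: ra) with hX
      have hb1 : x ≤ X := fst_le_maxLab _ _ _
      have hb2 : y ≤ X := snd_le_maxLab _ _ _
      obtain ⟨hk, hc'⟩ := base_even_bound hx' hy'1 hj1 (by omega) hne hb1 hb2
      constructor
      · have hm : maxLab ((nthAvoid 1 y j, nthAvoid 0 x j) :: (x, y) :: ra) ≤ X + 1 :=
          maxLab_cons_le hc' (by dsimp only; omega) (by omega)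
        simp only [List.length_cons]
        omega
      · have hm : maxLab [(k', k' - 1)] ≤ k' :=
          maxLab_cons_le (le_refl _) (by omega) (by simp [maxLab])
        simp only [List.length_cons]
        omega
    | odd x' y' rb hvb hodd' hlt' j' hj1' hj2' =>
      exfalso
      rw [Nat.odd_iff] at hodd'
      simp only [List.length_cons] at hpar heven hodd'
      omega
    | even x' y' rb hvb heven' hlt' j' hj1' hj2' =>
      dsimp only at hp
      obtain ⟨hx1, hxd, hyy⟩ := vd_bounds hva
      obtain ⟨hx1', hxd', hyy'⟩ := vd_bounds hvb
      rw [Nat.even_iff] at heven'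
      simp only [List.length_cons] at heven heven'
      have hy1 : 1 ≤ y := hyy (by omega)
      have hy1' : 1 ≤ y' := hyy' (by omega)
      by_cases hhe : (x, y) = (x', y')
      · exfalso
        apply hcc
        obtain ⟨hx', hy'⟩ := Prod.mk.injEq .. ▸ hhe
        subst hx'; subst hy'
        have := nA0_inj hj1 hj1' hp
        subst this
        rfl
      · have hEx := rel_ne_bound hR hhe
        set A := maxLab ((x, y) :: ra) with hA
        set B := maxLab ((x', y') :: rb) with hB
        set X := max A B with hXd
        have hXA : A ≤ X := le_max_left _ _
        have hXB : B ≤ X := le_max_right _ _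
        have hXc : X = A ∨ X = B := max_choice _ _
        have hxA : x ≤ A := fst_le_maxLab _ _ _
        have hyA : y ≤ A := snd_le_maxLab _ _ _
        have hxB : x' ≤ B := fst_le_maxLab _ _ _
        have hyB : y' ≤ B := snd_le_maxLab _ _ _
        have hne1 : nthAvoid 1 y j ≠ nthAvoid 1 y' j' := by
          intro he
          apply hcc
          simp only [Prod.ext_iff]
          exact ⟨he, hp⟩
        obtain ⟨hb1, hb2, hb3⟩ := even_dd_bound (X := X) hx1 hx1' hy1 hy1' hj1 hj1' rfl rfl hp hne1
          (by omega) (by omega) (by omega) (by omega)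
        simp only [List.length_cons] at hEx hpar ⊢
        have hm1 : maxLab ((nthAvoid 1 y j, nthAvoid 0 x j) :: (x, y) :: ra) ≤ X + 1 :=
          maxLab_cons_le hb1 (by omega) (by omega)
        have hm2 : maxLab ((nthAvoid 1 y' j', nthAvoid 0 x' j') :: (x', y') :: rb) ≤ X + 1 := by
          refine maxLab_cons_le hb2 ?_ (by omega)
          simp only
          omega
        constructor <;> omega

lemma rel_drop_ud {d n : ℕ} {ca cb : Nd} {a' b : List Nd}
    (hVb' : Vd d (cb :: b))
    (hpar : (ca :: a').length % 2 = b.length % 2)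
    (hp : ca.1 = cb.2)
    (hR : Rel d (n + 1) (ca :: a') b) : Rel d n a' (cb :: b) := by
  have hpar' : a'.length % 2 = (cb :: b).length % 2 := by
    simp only [List.length_cons] at hpar ⊢
    omega
  cases hVb' with
  | base k h1 h2 =>
    -- b = [], cb = (k, k-1)
    dsimp only at hp
    have hEx := rel_bound_nil hR
    have hca : ca.1 ≤ maxLab (ca :: a') := fst_le_maxLab _ _ _
    have hta : maxLab a' ≤ maxLab (ca :: a') := tail_le_maxLab _ _
    simp only [List.length_nil, List.length_cons] at hpar
    refine rel_of_bound hpar' (by omega) ?_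
    have hm : maxLab [(k, k - 1)] ≤ k :=
      maxLab_cons_le (le_refl _) (by omega) (by simp [maxLab])
    omega
  | odd x' y' rb hvb hodd hlt j hj1 hj2 =>
    -- b = (x',y') :: rb odd
    dsimp only at hp
    rw [Nat.odd_iff] at hodd
    obtain ⟨hx1', hxd', -⟩ := vd_bounds hvb
    have hne : ca ≠ (x', y') := by
      intro he
      have : ca.1 = x' := by rw [he]
      rw [this] at hp
      exact nA1_ne hj1 hp.symm
    have hEx := rel_ne_bound hR hne
    set A := maxLab (ca :: a') with hA
    set B := maxLab ((x', y') :: rb) with hB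
    set X := max A B with hXd
    have hXA : A ≤ X := le_max_left _ _
    have hXB : B ≤ X := le_max_right _ _
    have hXc : X = A ∨ X = B := max_choice _ _
    have hca : ca.1 ≤ A := fst_le_maxLab _ _ _
    have hta : maxLab a' ≤ A := tail_le_maxLab _ _
    have hxB : x' ≤ B := fst_le_maxLab _ _ _
    have hcb1 : nthAvoid 1 (bplus y') j ≤ X :=
      ud_odd_bound hx1' hj1 (by omega) (by omega)
    simp only [List.length_cons] at hpar hEx
    have hm : maxLab ((nthAvoid 1 (bplus y') j, nthAvoid 1 x' j) :: (x', y') :: rb) ≤ X := by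
      refine maxLab_cons_le hcb1 ?_ (by omega)
      simp only
      omega
    refine rel_of_bound hpar' (by omega) (by omega)
  | even x' y' rb hvb heven hlt j hj1 hj2 =>
    dsimp only at hp
    rw [Nat.even_iff] at heven
    obtain ⟨hx1', hxd', -⟩ := vd_bounds hvb
    have hne : ca ≠ (x', y') := by
      intro he
      have : ca.1 = x' := by rw [he]
      rw [this] at hp
      exact nA0_ne hj1 hp.symm
    simp only [List.length_cons] at heven
    have hEx := rel_ne_bound hR hne
    set A := maxLab (ca :: a') with hA
    set B := maxLab ((x', y') :: rb) with hB
    set X := max A B with hXd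
    have hXA : A ≤ X := le_max_left _ _
    have hXB : B ≤ X := le_max_right _ _
    have hXc : X = A ∨ X = B := max_choice _ _
    have hca : ca.1 ≤ A := fst_le_maxLab _ _ _
    have hta : maxLab a' ≤ A := tail_le_maxLab _ _
    have hxB : x' ≤ B := fst_le_maxLab _ _ _
    have hcb1 : nthAvoid 1 y' j ≤ X + 1 :=
      ud_even_bound hx1' hj1 (by omega) (by omega)
    simp only [List.length_cons] at hpar hEx
    have hm : maxLab ((nthAvoid 1 y' j, nthAvoid 0 x' j) :: (x', y') :: rb) ≤ X + 1 := by
      refine maxLab_cons_le hcb1 ?_ (by omega)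
      simp only
      omega
    refine rel_of_bound hpar' (by omega) (by omega)

lemma ed_len {d : ℕ} {v u : List Nd} (h : Ed d v u) :
    u.length = v.length + 1 ∨ v.length = u.length + 1 := by
  obtain ⟨-, -, c, hc | hc⟩ := h <;> subst hc <;> simp

lemma rel_drop {d n : ℕ} {a b a' b' : List Nd}
    (hpar : a.length % 2 = b.length % 2)
    (hEa : Ed d a a') (hEb : Ed d b b')
    (hp : outPort a' a = outPort b' b)
    (hR : Rel d (n + 1) a b) : Rel d n a' b' := by
  obtain ⟨hVa, hVa', ca, hca⟩ := hEa
  obtain ⟨hVb, hVb', cb, hcb⟩ := hEb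
  rcases hca with hda | hua <;> rcases hcb with hdb | hub
  · -- both down
    subst hda; subst hdb
    rw [outPort_down, outPort_down] at hp
    exact rel_drop_dd hVa' hVb' hpar hp hR
  · -- a down, b up
    subst hda; subst hub
    rw [outPort_down, outPort_up] at hp
    have hpar2 : (cb :: b').length % 2 = a.length % 2 := by
      simp only [List.length_cons] at hpar ⊢
      omega
    have h1 : Rel d (n + 1) (cb :: b') a := rel_symm hpar hR
    have h2 : Rel d n b' (ca :: a) := rel_drop_ud hVa' hpar2 hp.symm h1
    refine rel_symm ?_ h2
    simp only [List.length_cons] at hpar ⊢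
    omega
  · -- a up, b down
    subst hua; subst hdb
    rw [outPort_up, outPort_down] at hp
    exact rel_drop_ud hVb' hpar hp hR
  · -- both up
    subst hua; subst hub
    rw [outPort_up, outPort_up] at hp
    have := rel_tail hR
    rw [Nat.add_sub_cancel] at this
    exact this

/-! #### Surjectivity of the port assignments -/

lemma nA1_surj {d p f : ℕ} (hp1 : 1 ≤ p) (hpd : p ≤ d) (hf1 : 1 ≤ f) (hfd : f ≤ d)
    (hne : p ≠ f) : ∃ j, 1 ≤ j ∧ j ≤ d - 1 ∧ nthAvoid 1 f j = p := by
  refine ⟨if p < f then p else p - 1, ?_, ?_, ?_⟩ <;>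
    (try simp only [nthAvoid]) <;> split_ifs <;> omega

lemma nA0_surj {d p f : ℕ} (hpd : p + 1 ≤ d) (hf1 : 1 ≤ f) (hfd : f + 1 ≤ d)
    (hne : p ≠ f) : ∃ j, 1 ≤ j ∧ j ≤ d - 1 ∧ nthAvoid 0 f j = p := by
  refine ⟨if p < f then p + 1 else p, ?_, ?_, ?_⟩ <;>
    (try simp only [nthAvoid]) <;> split_ifs <;> omega

/-! #### Matching neighbours -/

lemma exists_matching {d : ℕ} (hd : 2 ≤ d) {a b x : List Nd}
    (hVa : Vd d a) (hVb : Vd d b)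
    (hpar : a.length % 2 = b.length % 2)
    (hlb : b.length < 2 * d)
    (hR : Rel d 1 a b)
    (hx : Ed d a x) : ∃ y, Ed d b y ∧ outPort y b = outPort x a := by
  obtain ⟨hVa2, hVx, c, hxd | hxu⟩ := hx
  · -- x = c :: a is a child of a
    subst hxd
    rw [outPort_down]
    cases hVx with
    | base k h1 h2 =>
      -- a = [], c = (k, k-1), port k-1
      simp only
      cases b with
      | nil =>
        exact ⟨[(k, k - 1)], ⟨Vd.nil, Vd.base k h1 h2, (k, k - 1), Or.inl rfl⟩,
          by rw [outPort_down]⟩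
      | cons e rb =>
        obtain ⟨x₁', y₁'⟩ := e
        obtain ⟨hbx1, hbxd, hby⟩ := vd_bounds hVb
        by_cases hpe : k - 1 = x₁'
        · refine ⟨rb, ⟨hVb, vd_tail hVb, (x₁', y₁'), Or.inr rfl⟩, ?_⟩
          rw [outPort_up]
          exact hpe.symm
        · have hEx := rel_nil_bound hR
          have hb1 : x₁' ≤ maxLab ((x₁', y₁') :: rb) := fst_le_maxLab _ _ _
          obtain ⟨j, hj1, hj2, hje⟩ :=
            nA0_surj (d := d) (p := k - 1) (f := x₁') (by omega) hbx1 (by omega) hpe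
          have heven : Even ((x₁', y₁') :: rb).length := by
            rw [Nat.even_iff]
            simp only [List.length_nil] at hpar
            omega
          refine ⟨(nthAvoid 1 y₁' j, nthAvoid 0 x₁' j) :: (x₁', y₁') :: rb,
            ⟨hVb, Vd.even x₁' y₁' rb hVb heven hlb j hj1 hj2, _, Or.inl rfl⟩, ?_⟩
          rw [outPort_down]
          exact hje
    | odd x₁ y₁ ra hva hodd hlt j₀ hj01 hj02 =>
      -- a = (x₁,y₁) :: ra odd, port p = nthAvoid 1 x₁ j₀
      simp only
      have hp1 : 1 ≤ nthAvoid 1 x₁ j₀ := nA1_pos hj01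
      have hpd : nthAvoid 1 x₁ j₀ ≤ d := nA1_le hj01 hj02
      rw [Nat.odd_iff] at hodd
      cases b with
      | nil =>
        exfalso
        simp only [List.length_nil] at hpar
        omega
      | cons e rb =>
        obtain ⟨x₁', y₁'⟩ := e
        obtain ⟨hbx1, hbxd, hby⟩ := vd_bounds hVb
        by_cases hpe : nthAvoid 1 x₁ j₀ = x₁'
        · refine ⟨rb, ⟨hVb, vd_tail hVb, (x₁', y₁'), Or.inr rfl⟩, ?_⟩
          rw [outPort_up]
          exact hpe.symm
        · obtain ⟨j, hj1, hj2, hje⟩ := nA1_surj hp1 hpd hbx1 hbxd hpe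
          have hoddb : Odd ((x₁', y₁') :: rb).length := by
            rw [Nat.odd_iff]
            omega
          refine ⟨(nthAvoid 1 (bplus y₁') j, nthAvoid 1 x₁' j) :: (x₁', y₁') :: rb,
            ⟨hVb, Vd.odd x₁' y₁' rb hVb hoddb hlb j hj1 hj2, _, Or.inl rfl⟩, ?_⟩
          rw [outPort_down]
          exact hje
    | even x₁ y₁ ra hva heven hlt j₀ hj01 hj02 =>
      -- a = (x₁,y₁) :: ra even, port p = nthAvoid 0 x₁ j₀
      simp only
      have hpd : nthAvoid 0 x₁ j₀ + 1 ≤ d := nA0_le hj01 hj02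
      rw [Nat.even_iff] at heven
      cases b with
      | nil =>
        refine ⟨[(nthAvoid 0 x₁ j₀ + 1, nthAvoid 0 x₁ j₀)],
          ⟨Vd.nil, ?_, _, Or.inl rfl⟩, by rw [outPort_down]⟩
        have := Vd.base (d := d) (nthAvoid 0 x₁ j₀ + 1) (by omega) (by omega)
        simpa using this
      | cons e rb =>
        obtain ⟨x₁', y₁'⟩ := e
        obtain ⟨hbx1, hbxd, hby⟩ := vd_bounds hVb
        have hevenb : Even ((x₁', y₁') :: rb).length := by
          rw [Nat.even_iff]
          simp only [List.length_cons] at hpar heven ⊢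
          omega
        by_cases hpe : nthAvoid 0 x₁ j₀ = x₁'
        · refine ⟨rb, ⟨hVb, vd_tail hVb, (x₁', y₁'), Or.inr rfl⟩, ?_⟩
          rw [outPort_up]
          exact hpe.symm
        · by_cases hxx : x₁ = x₁'
          · refine ⟨(nthAvoid 1 y₁' j₀, nthAvoid 0 x₁' j₀) :: (x₁', y₁') :: rb,
              ⟨hVb, Vd.even x₁' y₁' rb hVb hevenb hlb j₀ hj01 hj02, _, Or.inl rfl⟩, ?_⟩
            rw [outPort_down]
            rw [← hxx]
          · have hne : ((x₁ : ℕ), (y₁ : ℕ)) ≠ (x₁', y₁') := by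
              intro hc
              exact hxx (congrArg Prod.fst hc)
            have hEx := (rel_ne_bound hR hne).2
            have hb1 : x₁' ≤ maxLab ((x₁', y₁') :: rb) := fst_le_maxLab _ _ _
            have hparterm : (ra.length + 1) % 2 = 0 := by
              simp only [List.length_cons] at heven
              omega
            rw [hparterm] at hEx
            obtain ⟨j, hj1, hj2, hje⟩ :=
              nA0_surj (d := d) (p := nthAvoid 0 x₁ j₀) (f := x₁') (by omega) hbx1
                (by omega) hpe
            refine ⟨(nthAvoid 1 y₁' j, nthAvoid 0 x₁' j) :: (x₁', y₁') :: rb,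
              ⟨hVb, Vd.even x₁' y₁' rb hVb hevenb hlb j hj1 hj2, _, Or.inl rfl⟩, ?_⟩
            rw [outPort_down]
            exact hje
  · -- a = c :: x : x is the parent of a, port c.1
    subst hxu
    rw [outPort_up]
    obtain ⟨cx, cy⟩ := c
    obtain ⟨hcx1, hcxd, -⟩ := vd_bounds hVa2
    simp only
    cases b with
    | nil =>
      have hEx := rel_bound_nil hR
      have hb1 : cx ≤ maxLab ((cx, cy) :: x) := fst_le_maxLab _ _ _
      refine ⟨[(cx + 1, cx)], ⟨Vd.nil, ?_, _, Or.inl rfl⟩, by rw [outPort_down]⟩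
      have := Vd.base (d := d) (cx + 1) (by omega) (by omega)
      simpa using this
    | cons e rb =>
      obtain ⟨x₁', y₁'⟩ := e
      obtain ⟨hbx1, hbxd, hby⟩ := vd_bounds hVb
      by_cases hpe : cx = x₁'
      · refine ⟨rb, ⟨hVb, vd_tail hVb, (x₁', y₁'), Or.inr rfl⟩, ?_⟩
        rw [outPort_up]
        exact hpe.symm
      · rcases Nat.even_or_odd ((x₁', y₁') :: rb).length with hbe | hbo
        · -- even level
          rw [Nat.even_iff] at hbe
          have hne : ((cx : ℕ), (cy : ℕ)) ≠ (x₁', y₁') := by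
            intro hc
            exact hpe (congrArg Prod.fst hc)
          have hEx := rel_ne_bound hR hne
          have hb1 : x₁' ≤ maxLab ((x₁', y₁') :: rb) := fst_le_maxLab _ _ _
          have ha1 : cx ≤ maxLab ((cx, cy) :: x) := fst_le_maxLab _ _ _
          have hparterm : (x.length + 1) % 2 = 0 := by
            simp only [List.length_cons] at hpar hbe
            omega
          rw [hparterm] at hEx
          obtain ⟨j, hj1, hj2, hje⟩ :=
            nA0_surj (d := d) (p := cx) (f := x₁') (by omega) hbx1 (by omega) hpe
          have hevenb : Even ((x₁', y₁') :: rb).length := by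
            rw [Nat.even_iff]; exact hbe
          refine ⟨(nthAvoid 1 y₁' j, nthAvoid 0 x₁' j) :: (x₁', y₁') :: rb,
            ⟨hVb, Vd.even x₁' y₁' rb hVb hevenb hlb j hj1 hj2, _, Or.inl rfl⟩, ?_⟩
          rw [outPort_down]
          exact hje
        · -- odd level
          rw [Nat.odd_iff] at hbo
          obtain ⟨j, hj1, hj2, hje⟩ := nA1_surj hcx1 hcxd hbx1 hbxd hpe
          have hoddb : Odd ((x₁', y₁') :: rb).length := by
            rw [Nat.odd_iff]; exact hbo
          refine ⟨(nthAvoid 1 (bplus y₁') j, nthAvoid 1 x₁' j) :: (x₁', y₁') :: rb,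
            ⟨hVb, Vd.odd x₁' y₁' rb hVb hoddb hlb j hj1 hj2, _, Or.inl rfl⟩, ?_⟩
          rw [outPort_down]
          exact hje

end Aux

/-- Every PSW of length `k` in `G_d` satisfies `k ≥ 2d − 3`. -/
theorem PSW_length_lower_bound (d k : ℕ) (hd : 2 ≤ d) (w₁ w₂ : ℕ → List Nd)
    (h : IsPSW d k w₁ w₂) :
    2 * d - 3 ≤ k := by
  by_contra hk
  push_neg at hk
  have hpcw := h.toIsPCW
  have main : ∀ j, j ≤ k → Vd d (w₁ j) ∧ Vd d (w₂ j) ∧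
      (w₁ j).length % 2 = (w₂ j).length % 2 ∧
      (w₁ j).length ≤ j + 1 ∧ (w₂ j).length ≤ j + 1 ∧
      Rel d (2 * d - 3 - j) (w₁ j) (w₂ j) := by
    intro j
    induction j with
    | zero =>
      intro _
      rw [hpcw.start₁, hpcw.start₂]
      refine ⟨?_, ?_, by simp, by simp, by simp, ?_⟩
      · have := Vd.base (d := d) 1 (by omega) (by omega)
        simpa using this
      · have := Vd.base (d := d) 2 (by omega) (by omega)
        simpa using this
      · refine ⟨Or.inr ⟨?_, ?_⟩, trivial⟩ <;>
        · simp only [maxLab, List.length_nil]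
          norm_num
          omega
    | succ j ih =>
      intro hj
      obtain ⟨h1, h2, h3, h4, h5, h6⟩ := ih (by omega)
      have e1 := hpcw.walk₁ j (by omega)
      have e2 := hpcw.walk₂ j (by omega)
      have hcomp := hpcw.compat (j + 1) (by omega) (by omega)
      simp only [Nat.add_sub_cancel] at hcomp
      have hl1 := ed_len e1
      have hl2 := ed_len e2
      refine ⟨e1.2.1, e2.2.1, by omega, by omega, by omega, ?_⟩
      have heq : 2 * d - 3 - j = (2 * d - 3 - (j + 1)) + 1 := by omega
      rw [heq] at h6
      exact rel_drop h3 e1 e2 hcomp h6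
  obtain ⟨hV1, hV2, hpar, hlen1, hlen2, hrel⟩ := main k le_rfl
  obtain ⟨x, hEdx, hbad⟩ := h.sep
  have hrel1 : Rel d 1 (w₁ k) (w₂ k) := rel_mono (by omega) hrel
  obtain ⟨y, hEdy, hport⟩ := exists_matching hd hV1 hV2 hpar (by omega) hrel1 hEdx
  exact hbad y hEdy hport.symm

end Paper
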